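/- Let M ≥ 1, β > 0, β̂ > 0, m₀ = m₀(β̂) ∈ [0,1], and s ∈ {-1,1}^M a random vector with i.i.d. entries of mean m₀. If β(1 + (M−1)m₀²) < 1, then the only solution p ∈ ℝ^M of the equations p_μ = E_s[s_μ tanh(β s·p)] (for all μ) is p = 0. -/

import Mathlib

open Finset Real


lemma sinh_le_mul_cosh {x : ℝ} (hx : 0 ≤ x) : Real.sinh x ≤ x * Real.cosh x := by
  have h : MonotoneOn (fun y : ℝ => y * Real.cosh y - Real.sinh y) (Set.Ici 0) := by
    apply monotoneOn_of_deriv_nonneg (convex_Ici 0)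
    · fun_prop
    · intro y hy
      apply DifferentiableAt.differentiableWithinAt
      fun_prop
    · intro y hy
      rw [interior_Ici] at hy
      have : deriv (fun y : ℝ => y * Real.cosh y - Real.sinh y) y = y * Real.sinh y := by
        rw [deriv_fun_sub (by fun_prop) (by fun_prop), deriv_fun_mul (by fun_prop) (by fun_prop)]
        simp
      rw [this]
      exact mul_nonneg (le_of_lt hy) (Real.sinh_nonneg_iff.2 (le_of_lt hy))
  have := h (Set.self_mem_Ici) hx hx
  simp at this
  linarith

lemma mul_tanh_le (x : ℝ) : x * Real.tanh x ≤ x ^ 2 := by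
  have hc : 0 < Real.cosh x := Real.cosh_pos x
  rw [Real.tanh_eq_sinh_div_cosh, mul_div_assoc', div_le_iff₀ hc]
  rcases le_or_gt 0 x with hx | hx
  · have := sinh_le_mul_cosh hx
    nlinarith
  · have hx' : 0 ≤ -x := by linarith
    have := sinh_le_mul_cosh hx'
    rw [Real.sinh_neg, Real.cosh_neg] at this
    nlinarith

lemma sum_prod_bool {M : ℕ} (h : Fin M → Bool → ℝ) :
    ∑ s : Fin M → Bool, ∏ ν, h ν (s ν) = ∏ ν, (h ν true + h ν false) := by
  have : ∀ ν : Fin M, h ν true + h ν false = ∑ b : Bool, h ν b := by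
    intro ν; simp
  simp_rw [this]
  rw [Finset.prod_univ_sum]
  rw [Fintype.piFinset_univ]

abbrev sgn' (b : Bool) : ℝ := if b then 1 else -1

lemma sum_prod_bool' {M : ℕ} (h : Fin M → Bool → ℝ) :
    ∑ s : Fin M → Bool, ∏ ν, h ν (s ν) = ∏ ν, (h ν true + h ν false) := by
  have : ∀ ν : Fin M, h ν true + h ν false = ∑ b : Bool, h ν b := by
    intro ν; simp
  simp_rw [this]
  rw [Finset.prod_univ_sum]
  rw [Fintype.piFinset_univ]

lemma corr' {M : ℕ} (m₀ : ℝ) (μ ν : Fin M) :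
    ∑ s : Fin M → Bool, (∏ ρ, (1 + sgn' (s ρ) * m₀)/2) * (sgn' (s μ) * sgn' (s ν))
      = if μ = ν then 1 else m₀ ^ 2 := by
  rcases eq_or_ne μ ν with rfl | hne
  · rw [if_pos rfl]
    have h1 : ∀ s : Fin M → Bool,
        (∏ ρ, (1 + sgn' (s ρ) * m₀)/2) * (sgn' (s μ) * sgn' (s μ))
        = ∏ ρ, (1 + sgn' (s ρ) * m₀)/2 := by
      intro s
      have : sgn' (s μ) * sgn' (s μ) = 1 := by cases s μ <;> simp [sgn']
      rw [this, mul_one]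
    simp_rw [h1]
    rw [sum_prod_bool' (fun ρ b => (1 + sgn' b * m₀)/2)]
    have : ∀ ρ : Fin M, ((1 + sgn' true * m₀)/2 + (1 + sgn' false * m₀)/2) = 1 := by
      intro ρ; simp [sgn']; ring
    simp [sgn']
    ring
  · rw [if_neg hne]
    have hrw : ∀ s : Fin M → Bool,
        (∏ ρ, (1 + sgn' (s ρ) * m₀)/2) * (sgn' (s μ) * sgn' (s ν))
        = ∏ ρ, ((1 + sgn' (s ρ) * m₀)/2 *
            ((if ρ = μ then sgn' (s ρ) else 1) * (if ρ = ν then sgn' (s ρ) else 1))) := by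
      intro s
      rw [Finset.prod_mul_distrib, Finset.prod_mul_distrib]
      congr 1
      congr 1
      · rw [Finset.prod_ite_eq' Finset.univ μ (fun ρ => sgn' (s ρ))]; simp
      · rw [Finset.prod_ite_eq' Finset.univ ν (fun ρ => sgn' (s ρ))]; simp
    simp_rw [hrw]
    rw [sum_prod_bool' (fun ρ b => (1 + sgn' b * m₀)/2 *
        ((if ρ = μ then sgn' b else 1) * (if ρ = ν then sgn' b else 1)))]
    have hfac : ∀ ρ : Fin M,
        ((1 + sgn' true * m₀)/2 * ((if ρ = μ then sgn' true else 1) * (if ρ = ν then sgn' true else 1))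
        + (1 + sgn' false * m₀)/2 * ((if ρ = μ then sgn' false else 1) * (if ρ = ν then sgn' false else 1)))
        = (if ρ = μ then m₀ else 1) * (if ρ = ν then m₀ else 1) := by
      intro ρ
      rcases eq_or_ne ρ μ with rfl | h1
      · simp [sgn', hne]; ring
      · rcases eq_or_ne ρ ν with rfl | h2
        · simp [sgn', h1]; ring
        · simp [sgn', h1, h2]; ring
    simp_rw [hfac]
    rw [Finset.prod_mul_distrib,
        Finset.prod_ite_eq' Finset.univ μ (fun _ => m₀),
        Finset.prod_ite_eq' Finset.univ ν (fun _ => m₀)]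
    simp [sq]


/-- If `β(1+(M−1)m₀²) < 1` then the only solution of
`p_μ = E_s[s_μ tanh(β s·p)]` (i.i.d. signs of mean `m₀`) is `p = 0`. -/
theorem selfconsistency_only_zero_mismatched
    (M : ℕ) (hM : 1 ≤ M) (β m₀ : ℝ) (hβ : 0 < β)
    (hm₀0 : 0 ≤ m₀) (hm₀1 : m₀ ≤ 1)
    (hcond : β * (1 + ((M:ℝ) - 1) * m₀ ^ 2) < 1)
    (p : Fin M → ℝ)
    (hp : ∀ μ : Fin M,
      p μ = ∑ s : Fin M → Bool,
        (∏ ν : Fin M, ((1 + (if s ν then (1:ℝ) else -1) * m₀) / 2)) *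
          ((if s μ then (1:ℝ) else -1) *
            Real.tanh (β * ∑ ν : Fin M, (if s ν then (1:ℝ) else -1) * p ν))) :
    p = 0 := by
  classical
  set sg : Bool → ℝ := fun b => if b then 1 else -1 with hsg
  set w : (Fin M → Bool) → ℝ := fun s => ∏ ν, (1 + sg (s ν) * m₀) / 2 with hw
  set D : (Fin M → Bool) → ℝ := fun s => ∑ ν, sg (s ν) * p ν with hD
  have hp' : ∀ μ : Fin M, p μ = ∑ s : Fin M → Bool,
      w s * (sg (s μ) * Real.tanh (β * D s)) := hp
  have hwnn : ∀ s, 0 ≤ w s := by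
    intro s
    apply Finset.prod_nonneg
    intro ν _
    have : 0 ≤ 1 + sg (s ν) * m₀ := by cases s ν <;> simp [hsg] <;> linarith
    linarith
  set Q : ℝ := ∑ μ, p μ ^ 2 with hQdef
  have hQnn : 0 ≤ Q := Finset.sum_nonneg fun μ _ => sq_nonneg _
  -- Step 1: Q = ∑_s w s * (D s * tanh (β * D s))
  have key : Q = ∑ s : Fin M → Bool, w s * (D s * Real.tanh (β * D s)) := by
    have : Q = ∑ μ, (∑ s : Fin M → Bool, w s * (sg (s μ) * Real.tanh (β * D s))) * p μ := by
      rw [hQdef]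
      congr 1; funext μ; rw [← hp' μ]; ring
    rw [this]
    simp_rw [Finset.sum_mul]
    rw [Finset.sum_comm]
    refine Finset.sum_congr rfl fun s _ => ?_
    rw [hD]
    simp only [Finset.sum_mul, Finset.mul_sum]
    exact Finset.sum_congr rfl fun μ _ => by ring
  -- correlation values
  have corr2 : ∀ μ ν : Fin M,
      (∑ s : Fin M → Bool, w s * (sg (s μ) * sg (s ν))) = if μ = ν then 1 else m₀ ^ 2 := by
    intro μ ν
    exact corr' m₀ μ ν
  -- Step 2
  have step2 : Q ≤ β * ∑ s : Fin M → Bool, w s * D s ^ 2 := by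
    rw [key, Finset.mul_sum]
    apply Finset.sum_le_sum
    intro s _
    have h1 := mul_tanh_le (β * D s)
    calc w s * (D s * Real.tanh (β * D s)) ≤ w s * (β * D s ^ 2) := by
          apply mul_le_mul_of_nonneg_left _ (hwnn s)
          nlinarith
      _ = β * (w s * D s ^ 2) := by ring
  -- Step 3: second moment
  have hexp : ∀ s : Fin M → Bool,
      w s * D s ^ 2 = ∑ μ, ∑ ν, (p μ * p ν) * (w s * (sg (s μ) * sg (s ν))) := by
    intro s
    rw [hD]; simp only []
    rw [sq, Finset.sum_mul_sum, Finset.mul_sum]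
    refine Finset.sum_congr rfl fun μ _ => ?_
    rw [Finset.mul_sum]
    refine Finset.sum_congr rfl fun ν _ => ?_
    ring
  have second : ∑ s : Fin M → Bool, w s * D s ^ 2
      = (1 - m₀^2) * Q + m₀^2 * (∑ μ, p μ)^2 := by
    calc ∑ s : Fin M → Bool, w s * D s ^ 2
        = ∑ s : Fin M → Bool, ∑ μ, ∑ ν, (p μ * p ν) * (w s * (sg (s μ) * sg (s ν))) := by
          simp_rw [hexp]
      _ = ∑ μ, ∑ ν, ∑ s : Fin M → Bool, (p μ * p ν) * (w s * (sg (s μ) * sg (s ν))) := by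
          rw [Finset.sum_comm]
          exact Finset.sum_congr rfl fun μ _ => Finset.sum_comm ..
      _ = ∑ μ, ∑ ν, (p μ * p ν) * (if μ = ν then 1 else m₀^2) := by
          refine Finset.sum_congr rfl fun μ _ => Finset.sum_congr rfl fun ν _ => ?_
          rw [← Finset.mul_sum, corr2 μ ν]
      _ = (1 - m₀^2) * Q + m₀^2 * (∑ μ, p μ)^2 := by
          have hsplit : ∀ μ ν : Fin M, (p μ * p ν) * (if μ = ν then 1 else m₀^2)
              = (p μ * p ν) * m₀^2 + (if μ = ν then (p μ * p ν) * (1 - m₀^2) else 0) := by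
            intro μ ν; rcases eq_or_ne μ ν with rfl | h
            · simp; ring
            · simp [h]
          simp_rw [hsplit, Finset.sum_add_distrib]
          have e1 : ∑ μ, ∑ ν, (p μ * p ν) * m₀^2 = m₀^2 * (∑ μ, p μ)^2 := by
            have hsq : (∑ μ, p μ)^2 = ∑ μ, ∑ ν, p μ * p ν := by
              rw [sq, Finset.sum_mul_sum]
            rw [hsq, Finset.mul_sum]
            refine Finset.sum_congr rfl fun μ _ => ?_
            rw [Finset.mul_sum]
            exact Finset.sum_congr rfl fun ν _ => by ring
          have e2 : ∑ μ, (∑ ν, if μ = ν then (p μ * p ν) * (1 - m₀^2) else 0)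
              = (1 - m₀^2) * Q := by
            rw [hQdef, Finset.mul_sum]
            refine Finset.sum_congr rfl fun μ _ => ?_
            rw [Finset.sum_ite_eq]
            simp; ring
          rw [e1, e2]; ring
  -- Cauchy–Schwarz
  have cs : (∑ μ, p μ)^2 ≤ (M:ℝ) * Q := by
    have h := sq_sum_le_card_mul_sum_sq (s := (Finset.univ : Finset (Fin M))) (f := p)
    simpa [hQdef] using h
  have final : Q ≤ (β * (1 + ((M:ℝ) - 1) * m₀^2)) * Q := by
    calc Q ≤ β * ((1 - m₀^2)*Q + m₀^2*(∑ μ, p μ)^2) := by rw [← second]; exact step2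
      _ ≤ β * ((1 - m₀^2)*Q + m₀^2*((M:ℝ)*Q)) := by
          apply mul_le_mul_of_nonneg_left _ hβ.le
          nlinarith [sq_nonneg m₀]
      _ = (β * (1 + ((M:ℝ) - 1)*m₀^2)) * Q := by ring
  have hQ0 : Q = 0 := by nlinarith
  have hz := (Finset.sum_eq_zero_iff_of_nonneg
      (fun i _ => sq_nonneg (p i))).1 (hQdef ▸ hQ0)
  funext μ
  have := hz μ (Finset.mem_univ μ)
  have : p μ = 0 := by nlinarith [this]
  simpa using this
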